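/- Let T be a tree with order p and diameter d ≥ 2, and let ε = ε(T). If rn(T) = (p-1)(d+ε) - 2L(T) + ε, then there exists a linear order u_0, u_1, ..., u_{p-1} of the vertices of T such that (a) u_0 = w and u_{p-1} ∈ N(w) when W(T) = {w}, and {u_0, u_{p-1}} = {w, w'} when W(T) = {w, w'}; and (b) for all 0 ≤ i < j ≤ p-1, d(u_i, u_j) ≥ Σ_{t=i}^{j-1}(L(u_t) + L(u_{t+1})) - (j-i)(d+ε) + (d+1). -/

import Mathlib

namespace Radio

variable {V : Type*}

/-- The span of a labeling `f`: the maximum of `|f u - f v|` over all pairs of vertices. -/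
def span [Fintype V] (f : V → ℕ) : ℕ :=
  Finset.univ.sup fun p : V × V => ((f p.1 : ℤ) - (f p.2 : ℤ)).natAbs

/-- `f` is a radio labeling of `G`: `|f u - f v| ≥ diam G + 1 - d(u,v)` for all distinct `u, v`. -/
def IsRadioLabeling [Fintype V] (G : SimpleGraph V) (f : V → ℕ) : Prop :=
  ∀ u v : V, u ≠ v → G.diam + 1 ≤ G.dist u v + ((f u : ℤ) - (f v : ℤ)).natAbs

/-- The radio number of `G`: the minimum span of a radio labeling of `G`. -/
noncomputable def radioNumber [Fintype V] (G : SimpleGraph V) : ℕ :=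
  sInf { n | ∃ f : V → ℕ, IsRadioLabeling G f ∧ span f = n }

/-- The weight of `G` from a vertex `v`: `w_G(v) = ∑_u d(u, v)`. -/
noncomputable def weightFrom [Fintype V] (G : SimpleGraph V) (v : V) : ℕ :=
  ∑ u : V, G.dist u v

/-- The weight of `G`: the minimum of `w_G(v)` over all vertices `v`. -/
noncomputable def weight [Fintype V] (G : SimpleGraph V) : ℕ :=
  sInf (Set.range (weightFrom G))

/-- The set of weight centers of `G`: vertices minimizing `w_G(·)`. -/
def weightCenters [Fintype V] (G : SimpleGraph V) : Set V :=
  { v | ∀ x : V, weightFrom G v ≤ weightFrom G x }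

/-- The level of a vertex `u`: `L(u) = min { d(u, x) : x ∈ W(G) }`. -/
noncomputable def level [Fintype V] (G : SimpleGraph V) (u : V) : ℕ :=
  sInf (G.dist u '' weightCenters G)

/-- The total level of `G`: `L(G) = ∑_u L(u)`. -/
noncomputable def totalLevel [Fintype V] (G : SimpleGraph V) : ℕ :=
  ∑ u : V, level G u

/-- `ε(G) = 1` if `G` has exactly one weight center, and `0` otherwise
(for a tree the other case is exactly that of two adjacent weight centers). -/
noncomputable def epsilon [Fintype V] (G : SimpleGraph V) : ℕ :=
  if (weightCenters G).ncard = 1 then 1 else 0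


/-! ### Auxiliary lemmas -/

section Aux

open SimpleGraph Finset

lemma walk_mem_edge {G : SimpleGraph V} (hT : G.IsTree) {w a : V} (h : G.Adj w a)
    (p : G.Walk w a) : s(w, a) ∈ p.edges :=
  ((SimpleGraph.isBridge_iff_adj_and_forall_walk_mem_edges.mp
    (SimpleGraph.isAcyclic_iff_forall_adj_isBridge.mp hT.IsAcyclic h)) p)

lemma dist_add_dist_le_of_mem_support {G : SimpleGraph V} {u z x : V} (p : G.Walk u z)
    (hx : x ∈ p.support) : G.dist u x + G.dist x z ≤ p.length := by
  classical
  have hl := congrArg SimpleGraph.Walk.length (p.take_spec hx)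
  rw [SimpleGraph.Walk.length_append] at hl
  calc G.dist u x + G.dist x z ≤ (p.takeUntil x hx).length + (p.dropUntil x hx).length :=
        add_le_add (SimpleGraph.dist_le _) (SimpleGraph.dist_le _)
    _ = p.length := hl

/-- side dichotomy for an edge of a tree -/
lemma tree_side {G : SimpleGraph V} (hT : G.IsTree) {w a : V} (h : G.Adj w a) (u : V) :
    G.dist u a = G.dist u w + 1 ∨ G.dist u w = G.dist u a + 1 := by
  classical
  have hconn := hT.isConnected
  have hwa : G.dist w a = 1 := SimpleGraph.dist_eq_one_iff_adj.mpr h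
  have haw : G.dist a w = 1 := SimpleGraph.dist_eq_one_iff_adj.mpr h.symm
  obtain ⟨p, hp⟩ := hconn.exists_walk_length_eq_dist u w
  by_cases he : s(w, a) ∈ p.edges
  · right
    have ha : a ∈ p.support := p.snd_mem_support_of_mem_edges he
    have h1 : G.dist u a + G.dist a w ≤ p.length := dist_add_dist_le_of_mem_support p ha
    have h2 : G.dist u w ≤ G.dist u a + G.dist a w := hconn.dist_triangle
    omega
  · left
    obtain ⟨q, hq⟩ := hconn.exists_walk_length_eq_dist u a
    have h2 : G.dist u a ≤ G.dist u w + G.dist w a := hconn.dist_triangle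
    have hr : s(w, a) ∈ (p.reverse.append q).edges := walk_mem_edge hT h _
    rw [SimpleGraph.Walk.edges_append, List.mem_append, SimpleGraph.Walk.edges_reverse,
      List.mem_reverse] at hr
    have heq : s(w, a) ∈ q.edges := hr.resolve_left he
    have hw : w ∈ q.support := q.fst_mem_support_of_mem_edges heq
    have h1 : G.dist u w + G.dist w a ≤ q.length := dist_add_dist_le_of_mem_support q hw
    omega

/-- separation across a tree edge -/
lemma tree_separation {G : SimpleGraph V} (hT : G.IsTree) {w a u z : V} (h : G.Adj w a)
    (hu : G.dist u w < G.dist u a) (hz : G.dist z a < G.dist z w) :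
    G.dist u z = G.dist u w + 1 + G.dist a z := by
  classical
  have hconn := hT.isConnected
  have hwa : G.dist w a = 1 := SimpleGraph.dist_eq_one_iff_adj.mpr h
  have haw : G.dist a w = 1 := SimpleGraph.dist_eq_one_iff_adj.mpr h.symm
  have hu' : G.dist u a = G.dist u w + 1 := by rcases tree_side hT h u with h' | h' <;> omega
  have hz' : G.dist z w = G.dist z a + 1 := by rcases tree_side hT h z with h' | h' <;> omega
  obtain ⟨pw, hpw⟩ := hconn.exists_walk_length_eq_dist w u
  obtain ⟨q, hq⟩ := hconn.exists_walk_length_eq_dist u z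
  obtain ⟨pz, hpz⟩ := hconn.exists_walk_length_eq_dist z a
  have hcomm : ∀ x y : V, G.dist x y = G.dist y x := fun x y => SimpleGraph.dist_comm
  have hr : s(w, a) ∈ ((pw.append q).append pz).edges := walk_mem_edge hT h _
  rw [SimpleGraph.Walk.edges_append, List.mem_append, SimpleGraph.Walk.edges_append,
    List.mem_append] at hr
  have hle1 : G.dist u z ≤ G.dist u w + G.dist w z := hconn.dist_triangle
  have hle2 : G.dist w z ≤ G.dist w a + G.dist a z := hconn.dist_triangle
  rcases hr with (hr | hr) | hr
  · exfalso
    have ha : a ∈ pw.support := pw.snd_mem_support_of_mem_edges hr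
    have h1 : G.dist w a + G.dist a u ≤ pw.length := dist_add_dist_le_of_mem_support pw ha
    have := hcomm a u; have := hcomm w u
    omega
  · have hwq : w ∈ q.support := q.fst_mem_support_of_mem_edges hr
    have h1 : G.dist u w + G.dist w z ≤ q.length := dist_add_dist_le_of_mem_support q hwq
    have := hcomm w z
    have := hcomm a z
    omega
  · exfalso
    have hwz : w ∈ pz.support := pz.fst_mem_support_of_mem_edges hr
    have h1 : G.dist z w + G.dist w a ≤ pz.length := dist_add_dist_le_of_mem_support pz hwz
    omega

variable [Fintype V] {G : SimpleGraph V}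

open Classical in
lemma weight_diff (hT : G.IsTree) {w a : V} (h : G.Adj w a) :
    (weightFrom G a : ℤ) - weightFrom G w =
      (univ.filter fun u => G.dist u w < G.dist u a).card -
        (univ.filter fun u => G.dist u a < G.dist u w).card := by
  classical
  have key : ∀ u : V, (G.dist u a : ℤ) - G.dist u w =
      if G.dist u w < G.dist u a then 1 else -1 := by
    intro u
    rcases tree_side hT h u with h' | h' <;> split <;> omega
  calc (weightFrom G a : ℤ) - weightFrom G w
      = ∑ u : V, ((G.dist u a : ℤ) - G.dist u w) := by
        unfold weightFrom; push_cast; rw [Finset.sum_sub_distrib]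
    _ = ∑ u : V, (if G.dist u w < G.dist u a then (1 : ℤ) else -1) :=
        Finset.sum_congr rfl fun u _ => key u
    _ = _ := by
        rw [Finset.sum_ite, Finset.sum_const, Finset.sum_const]
        have : ∀ u : V, (¬ G.dist u w < G.dist u a) ↔ G.dist u a < G.dist u w := by
          intro u; rcases tree_side hT h u with h' | h' <;> constructor <;> intro <;> omega
        rw [Finset.filter_congr (fun u _ => this u)]
        simp [sub_eq_add_neg]

open Classical in
lemma side_partition (hT : G.IsTree) {w a : V} (h : G.Adj w a) :
    (univ.filter fun u => G.dist u w < G.dist u a).card +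
      (univ.filter fun u => G.dist u a < G.dist u w).card = Fintype.card V := by
  classical
  rw [← Finset.card_union_of_disjoint]
  · congr 1
    rw [Finset.eq_univ_iff_forall]
    intro u
    rw [Finset.mem_union, Finset.mem_filter, Finset.mem_filter]
    rcases tree_side hT h u with h' | h' <;> simp <;> omega
  · rw [Finset.disjoint_filter]
    intro u _ h1 h2
    omega

lemma centers_dist_le_one (hT : G.IsTree) {w w' : V}
    (hw : w ∈ weightCenters G) (hw' : w' ∈ weightCenters G) : G.dist w w' ≤ 1 := by
  classical
  have hconn := hT.isConnected
  suffices main : ∀ k : ℕ, ∀ w w' : V, w ∈ weightCenters G → w' ∈ weightCenters G →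
      G.dist w w' = k → k ≤ 1 from main _ w w' hw hw' rfl
  intro k
  induction k using Nat.strong_induction_on with
  | _ k IH =>
    intro w w' hw hw' hk
    by_contra hk2
    push_neg at hk2
    have hk2 : 2 ≤ k := hk2
    have hnbr : ∀ x y : V, 2 ≤ G.dist x y → ∃ a : V, G.Adj x a ∧ G.dist a y = G.dist x y - 1 := by
      intro x y hxy
      obtain ⟨p, hp⟩ := hconn.exists_walk_length_eq_dist x y
      cases p with
      | nil => simp at hp; rw [SimpleGraph.dist_self] at hxy; omega
      | cons hadj q =>
        rename_i b
        refine ⟨b, hadj, ?_⟩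
        rw [SimpleGraph.Walk.length_cons] at hp
        have h1 : G.dist b y ≤ q.length := SimpleGraph.dist_le q
        have h2 : G.dist x y ≤ G.dist x b + G.dist b y := hconn.dist_triangle
        have h3 : G.dist x b = 1 := SimpleGraph.dist_eq_one_iff_adj.mpr hadj
        omega
    obtain ⟨a, haw, hadist⟩ := hnbr w w' (by omega)
    obtain ⟨b, hbw', hbdist⟩ := hnbr w' w (by rw [SimpleGraph.dist_comm]; omega)
    rw [hk] at hadist
    rw [show G.dist w' w = k from by rw [SimpleGraph.dist_comm]; exact hk] at hbdist
    have hcomm : ∀ x y : V, G.dist x y = G.dist y x := fun x y => SimpleGraph.dist_comm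
    have hww' := hk
    have hw'w : G.dist w' w = k := by rw [← hcomm]; exact hk
    set A := (univ.filter fun u => G.dist u w < G.dist u a) with hA
    set Ac := (univ.filter fun u => G.dist u a < G.dist u w) with hAc
    set B := (univ.filter fun u => G.dist u w' < G.dist u b) with hB
    set Bc := (univ.filter fun u => G.dist u b < G.dist u w') with hBc
    have hS1 : (Ac.card : ℤ) ≤ A.card := by
      have := weight_diff hT haw
      rw [← hA, ← hAc] at this
      have h0 : (0:ℤ) ≤ (weightFrom G a : ℤ) - weightFrom G w := by
        have := hw a; omega
      omega
    have hS2 : (Bc.card : ℤ) ≤ B.card := by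
      have := weight_diff hT hbw'
      rw [← hB, ← hBc] at this
      have h0 : (0:ℤ) ≤ (weightFrom G b : ℤ) - weightFrom G w' := by
        have := hw' b; omega
      omega
    have hw'side : G.dist w' a < G.dist w' w := by
      rw [hcomm w' a, hcomm w' w]; omega
    have hwside : G.dist w b < G.dist w w' := by
      rw [hcomm w b]; omega
    have hAB : A ⊆ Bc := by
      intro u hu
      rw [hA, Finset.mem_filter] at hu
      rw [hBc, Finset.mem_filter]
      refine ⟨Finset.mem_univ u, ?_⟩
      have hsep : G.dist u w' = G.dist u w + 1 + G.dist a w' := tree_separation hT haw hu.2 hw'side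
      have : G.dist u b ≤ G.dist u w + G.dist w b := hconn.dist_triangle
      have := hcomm w b
      omega
    have hBA : B ⊆ Ac := by
      intro u hu
      rw [hB, Finset.mem_filter] at hu
      rw [hAc, Finset.mem_filter]
      refine ⟨Finset.mem_univ u, ?_⟩
      have hsep : G.dist u w = G.dist u w' + 1 + G.dist b w := tree_separation hT hbw' hu.2 hwside
      have : G.dist u a ≤ G.dist u w' + G.dist w' a := hconn.dist_triangle
      have := hcomm w' a
      omega
    have c1 : A.card ≤ Bc.card := Finset.card_le_card hAB
    have c2 : B.card ≤ Ac.card := Finset.card_le_card hBA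
    have hAeq : A.card = Ac.card := by omega
    have haC : a ∈ weightCenters G := by
      have hwd := weight_diff hT haw
      rw [← hA, ← hAc] at hwd
      have heq : weightFrom G a = weightFrom G w := by omega
      intro x; rw [heq]; exact hw x
    have hk1 : k - 1 ≤ 1 := IH (k-1) (by omega) a w' haC hw' hadist
    have hk2' : k = 2 := by omega
    have haw' : G.Adj a w' := by
      rw [← SimpleGraph.dist_eq_one_iff_adj]; omega
    set C := (univ.filter fun u => G.dist u w' < G.dist u a) with hC
    set Cc := (univ.filter fun u => G.dist u a < G.dist u w') with hCc
    have hCeq : (Cc.card : ℤ) - C.card = 0 := by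
      have hwd := weight_diff hT haw'.symm
      rw [← hC, ← hCc] at hwd
      have h1 : weightFrom G a = weightFrom G w' := le_antisymm (haC w') (hw' a)
      rw [h1] at hwd
      simp only [sub_self] at hwd
      omega
    have hpartA : A.card + Ac.card = Fintype.card V := by
      have := side_partition hT haw; rw [← hA, ← hAc] at this; exact this
    have hpartC : C.card + Cc.card = Fintype.card V := by
      have := side_partition hT haw'.symm; rw [← hC, ← hCc] at this; exact this
    have hACdisj : Disjoint A C := by
      rw [Finset.disjoint_left]
      intro u huA huC
      rw [hA, Finset.mem_filter] at huA
      rw [hC, Finset.mem_filter] at huC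
      have hsep : G.dist u w' = G.dist u w + 1 + G.dist a w' :=
        tree_separation hT haw huA.2 hw'side
      have hside : G.dist u a = G.dist u w + 1 := by
        rcases tree_side hT haw u with h' | h' <;> omega
      have := hcomm a w'
      omega
    have haA : a ∉ A := by
      rw [hA, Finset.mem_filter]
      push_neg
      intro _
      have h0 : G.dist a a = 0 := SimpleGraph.dist_self
      have : G.dist a w = 1 := SimpleGraph.dist_eq_one_iff_adj.mpr haw.symm
      omega
    have haCmem : a ∉ C := by
      rw [hC, Finset.mem_filter]
      push_neg
      intro _
      have h0 : G.dist a a = 0 := SimpleGraph.dist_self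
      have : G.dist a w' = 1 := SimpleGraph.dist_eq_one_iff_adj.mpr haw'
      omega
    have hunion : (A ∪ C).card = A.card + C.card := Finset.card_union_of_disjoint hACdisj
    have hsub : A ∪ C ⊆ univ.erase a := by
      intro x hx
      rw [Finset.mem_erase]
      rcases Finset.mem_union.mp hx with h' | h'
      · exact ⟨fun he => haA (he ▸ h'), Finset.mem_univ x⟩
      · exact ⟨fun he => haCmem (he ▸ h'), Finset.mem_univ x⟩
    have hcardsub : (A ∪ C).card ≤ Fintype.card V - 1 := by
      have := Finset.card_le_card hsub
      rwa [Finset.card_erase_of_mem (Finset.mem_univ a), Finset.card_univ] at this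
    have hcard1 : 1 ≤ Fintype.card V := Fintype.card_pos_iff.mpr ⟨a⟩
    omega

lemma weightCenters_nonempty [Nonempty V] : (weightCenters G).Nonempty := by
  classical
  obtain ⟨w, -, hw⟩ := Finset.exists_min_image Finset.univ (weightFrom G)
    ⟨Classical.arbitrary V, Finset.mem_univ _⟩
  exact ⟨w, fun x => hw x (Finset.mem_univ x)⟩

lemma level_le {w : V} (hw : w ∈ weightCenters G) (u : V) : level G u ≤ G.dist u w :=
  Nat.sInf_le ⟨w, hw, rfl⟩

lemma exists_level [Nonempty V] (u : V) : ∃ w ∈ weightCenters G, level G u = G.dist u w := by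
  have hne : (G.dist u '' weightCenters G).Nonempty :=
    (weightCenters_nonempty (G := G)).image _
  obtain ⟨w, hw, hd⟩ := Nat.sInf_mem hne
  exact ⟨w, hw, hd.symm⟩

lemma level_eq_zero_iff [Nonempty V] (hconn : G.Connected) (u : V) :
    level G u = 0 ↔ u ∈ weightCenters G := by
  constructor
  · intro h
    obtain ⟨w, hw, hd⟩ := exists_level (G := G) u
    rw [h] at hd
    rwa [(hconn.dist_eq_zero_iff).mp hd.symm]
  · intro h
    have := level_le h u
    simpa [SimpleGraph.dist_self] using Nat.le_zero.mp (by simpa [SimpleGraph.dist_self] using this)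

lemma level_eq_dist {w : V} (hW : weightCenters G = {w}) (u : V) : level G u = G.dist u w := by
  have hw : w ∈ weightCenters G := by rw [hW]; rfl
  refine le_antisymm (level_le hw u) ?_
  have : Nonempty V := ⟨w⟩
  obtain ⟨w', hw', hd⟩ := exists_level (G := G) u
  rw [hW] at hw'
  rw [hd, hw']

lemma epsilon_le_one : epsilon G ≤ 1 := by
  unfold epsilon; split <;> omega

lemma dist_le_levels (hT : G.IsTree) (u v : V) :
    (G.dist u v : ℤ) ≤ level G u + level G v + 1 - epsilon G := by
  have hconn := hT.isConnected
  have : Nonempty V := hconn.nonempty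
  by_cases hnc : (weightCenters G).ncard = 1
  · obtain ⟨w, hW⟩ := Set.ncard_eq_one.mp hnc
    have h1 : level G u = G.dist u w := level_eq_dist hW u
    have h2 : level G v = G.dist v w := level_eq_dist hW v
    have htri : G.dist u v ≤ G.dist u w + G.dist w v := hconn.dist_triangle
    have hcm : G.dist w v = G.dist v w := SimpleGraph.dist_comm
    have hε : epsilon G = 1 := by unfold epsilon; simp [hnc]
    rw [hε, h1, h2]; push_cast; omega
  · obtain ⟨cu, hcu, h1⟩ := exists_level (G := G) u
    obtain ⟨cv, hcv, h2⟩ := exists_level (G := G) v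
    have htri1 : G.dist u v ≤ G.dist u cv + G.dist cv v := hconn.dist_triangle
    have htri2 : G.dist u cv ≤ G.dist u cu + G.dist cu cv := hconn.dist_triangle
    have hcc : G.dist cu cv ≤ 1 := centers_dist_le_one hT hcu hcv
    have hcm : G.dist cv v = G.dist v cv := SimpleGraph.dist_comm
    have hε : epsilon G = 0 := by unfold epsilon; simp [hnc]
    rw [hε, h1, h2]; push_cast; omega

end Aux

/-- necessity part of the Bantva–Vaidya–Zhou characterization.
If `rn(T) = (p-1)(d+ε) - 2 L(T) + ε` for a tree `T` with diameter `d ≥ 2`, then there is a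
linear order `u 0, u 1, …, u (p-1)` of the vertices of `T` satisfying conditions (a) and (b). -/
theorem exists_order_of_radioNumber_tree_eq {V : Type*} [Fintype V]
    (G : SimpleGraph V) (hT : G.IsTree) (hd : 2 ≤ G.diam)
    (hrn : (radioNumber G : ℤ) =
      ((Fintype.card V : ℤ) - 1) * ((G.diam : ℤ) + (epsilon G : ℤ))
        - 2 * (totalLevel G : ℤ) + (epsilon G : ℤ)) :
    ∃ u : ℕ → V,
      (∀ v : V, ∃! i : ℕ, i < Fintype.card V ∧ u i = v) ∧
      -- (a), one weight center case
      (∀ w : V, weightCenters G = {w} →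
        u 0 = w ∧ G.Adj w (u (Fintype.card V - 1))) ∧
      -- (a), two weight centers case
      (∀ w w' : V, w ≠ w' → weightCenters G = {w, w'} →
        ({u 0, u (Fintype.card V - 1)} : Set V) = {w, w'}) ∧
      -- (b)
      (∀ i j : ℕ, i < j → j ≤ Fintype.card V - 1 →
        (∑ t ∈ Finset.Ico i j, ((level G (u t) : ℤ) + (level G (u (t + 1)) : ℤ)))
            - ((j : ℤ) - (i : ℤ)) * ((G.diam : ℤ) + (epsilon G : ℤ)) + ((G.diam : ℤ) + 1)
          ≤ (G.dist (u i) (u j) : ℤ)) := by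
  classical
  have hconn := hT.isConnected
  have hnV : Nonempty V := hconn.nonempty
  set n := Fintype.card V with hn
  have hdne : G.diam ≠ 0 := by omega
  have hnontriv : Nontrivial V := SimpleGraph.nontrivial_of_diam_ne_zero hdne
  have hn2 : 2 ≤ n := Fintype.one_lt_card
  have hdists : ∀ u v : V, G.dist u v ≤ G.diam :=
    fun u v => SimpleGraph.dist_le_diam (SimpleGraph.ediam_ne_top_of_diam_ne_zero hdne)
  have hεle : epsilon G ≤ 1 := epsilon_le_one
  have hLub : ∀ u v : V, (G.dist u v : ℤ) ≤ level G u + level G v + 1 - epsilon G :=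
    dist_le_levels hT
  -- an optimal radio labeling exists
  have hRne : {m | ∃ f : V → ℕ, IsRadioLabeling G f ∧ span f = m}.Nonempty := by
    refine ⟨span (fun v => (G.diam + 1) * ((Fintype.equivFin V) v : ℕ)),
      (fun v => (G.diam + 1) * ((Fintype.equivFin V) v : ℕ)), ?_, rfl⟩
    intro u v huv
    have hne : ((Fintype.equivFin V) u : ℕ) ≠ ((Fintype.equivFin V) v : ℕ) := by
      intro h
      exact huv ((Fintype.equivFin V).injective (Fin.ext h))
    have habs : ((((G.diam + 1) * ((Fintype.equivFin V) u : ℕ) : ℕ) : ℤ)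
        - (((G.diam + 1) * ((Fintype.equivFin V) v : ℕ) : ℕ) : ℤ)).natAbs
        = (G.diam + 1) * (((Fintype.equivFin V) u : ℤ)
          - ((Fintype.equivFin V) v : ℤ)).natAbs := by
      push_cast
      rw [← mul_sub, Int.natAbs_mul, show ((G.diam : ℤ) + 1).natAbs = G.diam + 1 by omega]
    have h1 : 1 ≤ (((Fintype.equivFin V) u : ℤ) - ((Fintype.equivFin V) v : ℤ)).natAbs := by
      omega
    calc G.diam + 1 ≤ (G.diam + 1) * (((Fintype.equivFin V) u : ℤ)
          - ((Fintype.equivFin V) v : ℤ)).natAbs := Nat.le_mul_of_pos_right _ (by omega)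
      _ = ((((G.diam + 1) * ((Fintype.equivFin V) u : ℕ) : ℕ) : ℤ)
        - (((G.diam + 1) * ((Fintype.equivFin V) v : ℕ) : ℕ) : ℤ)).natAbs := habs.symm
      _ ≤ G.dist u v + _ := Nat.le_add_left _ _
  obtain ⟨f, hf, hspan⟩ := Nat.sInf_mem hRne
  have hspan_eq : (span f : ℤ) = ((n : ℤ) - 1) * ((G.diam : ℤ) + epsilon G)
      - 2 * totalLevel G + epsilon G := by
    rw [hspan]; exact hrn
  -- f is injective
  have hfinj : Function.Injective f := by
    intro u v huv0
    by_contra hne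
    have h := hf u v hne
    rw [huv0, sub_self] at h
    simp only [Int.natAbs_zero, add_zero] at h
    have := hdists u v
    omega
  -- sort the vertices by label
  set E : Fin n → V :=
    fun i => (Fintype.equivFin V).symm
      (Tuple.sort (fun j => f ((Fintype.equivFin V).symm j)) i) with hE
  have hEbij : Function.Bijective E := by
    rw [hE]
    exact (Fintype.equivFin V).symm.bijective.comp
      (Tuple.sort (fun j => f ((Fintype.equivFin V).symm j))).bijective
  have hmono : Monotone (fun i : Fin n => f (E i)) := by
    simp only [hE]
    exact Tuple.monotone_sort (fun j => f ((Fintype.equivFin V).symm j))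
  have hstrict : ∀ i j : Fin n, i < j → f (E i) < f (E j) := by
    intro i j hij
    refine lt_of_le_of_ne (hmono hij.le) fun h => hij.ne (hEbij.injective (hfinj h))
  have hn1 : n - 1 < n := by omega
  set e : ℕ → V := fun i => E ⟨min i (n-1), lt_of_le_of_lt (min_le_right _ _) hn1⟩ with he
  have heE : ∀ (i : ℕ) (h : i ≤ n - 1), e i = E ⟨i, by omega⟩ := by
    intro i h
    simp only [he]
    congr 1
    exact Fin.ext (by simp [Nat.min_eq_left h])
  have hbij : ∀ v : V, ∃! i : ℕ, i < n ∧ e i = v := by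
    intro v
    obtain ⟨i, hi⟩ := hEbij.surjective v
    refine ⟨i.1, ⟨i.2, by rw [heE i.1 (by omega), Fin.eta]; exact hi⟩, ?_⟩
    rintro j ⟨hj, hje⟩
    have h1 : E ⟨j, hj⟩ = E i := (heE j (by omega)).symm.trans (hje.trans hi.symm)
    exact congrArg Fin.val (hEbij.injective h1)
  have hediff : ∀ i j : ℕ, i ≤ n - 1 → j ≤ n - 1 → i ≠ j → e i ≠ e j := by
    intro i j hi hj hij hcon
    rw [heE i hi, heE j hj] at hcon
    have := congrArg Fin.val (hEbij.injective hcon)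
    simp only at this
    omega
  set F : ℕ → ℤ := fun i => (f (e i) : ℤ) with hF
  have hFlt : ∀ i j : ℕ, i < j → j ≤ n - 1 → F i < F j := by
    intro i j hij hj
    simp only [hF]
    rw [heE i (by omega), heE j (by omega)]
    exact_mod_cast hstrict _ _ (by rw [Fin.mk_lt_mk]; exact hij)
  have hFle_all : ∀ x : V, F 0 ≤ (f x : ℤ) ∧ (f x : ℤ) ≤ F (n-1) := by
    intro x
    obtain ⟨i, ⟨hi, hix⟩, -⟩ := hbij x
    have h0 : F 0 ≤ F i := by
      rcases Nat.eq_zero_or_pos i with h | h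
      · rw [h]
      · exact (hFlt 0 i h (by omega)).le
    have h1 : F i ≤ F (n-1) := by
      rcases eq_or_lt_of_le (show i ≤ n - 1 by omega) with h | h
      · rw [h]
      · exact (hFlt i (n-1) h le_rfl).le
    have : F i = (f x : ℤ) := by rw [hF]; simp only; rw [hix]
    omega
  have hF0le : F 0 ≤ F (n-1) := (hFlt 0 (n-1) (by omega) le_rfl).le
  have hspanval : (span f : ℤ) = F (n-1) - F 0 := by
    have hub : span f ≤ (F (n-1) - F 0).toNat := by
      apply Finset.sup_le
      intro p _
      have ha := hFle_all p.1
      have hb := hFle_all p.2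
      omega
    have hlb : ((F (n-1) - F 0).natAbs : ℕ) ≤ span f := by
      have := Finset.le_sup (f := fun p : V × V => ((f p.1 : ℤ) - (f p.2 : ℤ)).natAbs)
        (Finset.mem_univ (e (n-1), e 0))
      exact this
    omega
  -- lower bound for each gap
  have hgap_lb : ∀ t, t < n - 1 →
      (G.diam : ℤ) + epsilon G - level G (e t) - level G (e (t+1)) ≤ F (t+1) - F t := by
    intro t ht
    have hne : e t ≠ e (t+1) := hediff t (t+1) (by omega) (by omega) (by omega)
    have hr := hf (e t) (e (t+1)) hne
    have hr' : (G.diam : ℤ) + 1 ≤ (G.dist (e t) (e (t+1)) : ℤ)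
        + ((f (e t) : ℤ) - (f (e (t+1)) : ℤ)).natAbs := by exact_mod_cast hr
    have hub := hLub (e t) (e (t+1))
    have hlt := hFlt t (t+1) (by omega) (by omega)
    simp only [hF] at hlt ⊢
    omega
  have htele : ∑ t ∈ Finset.range (n-1), (F (t+1) - F t) = F (n-1) - F 0 :=
    Finset.sum_range_sub F (n-1)
  have hsum_e : ∑ i ∈ Finset.range n, (level G (e i) : ℤ) = (totalLevel G : ℤ) := by
    rw [← Fin.sum_univ_eq_sum_range (fun k => (level G (e k) : ℤ)) n]
    have h1 : ∑ i : Fin n, (level G (e i.1) : ℤ) = ∑ i : Fin n, (level G (E i) : ℤ) :=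
      Finset.sum_congr rfl fun i _ => by rw [heE i.1 (by omega), Fin.eta]
    rw [h1, hEbij.sum_comp (fun x => (level G x : ℤ))]
    rw [totalLevel]
    push_cast
    rfl
  have hsum1 : ∑ t ∈ Finset.range (n-1), (level G (e t) : ℤ)
      = (totalLevel G : ℤ) - level G (e (n-1)) := by
    have h := Finset.sum_range_succ (fun t => (level G (e t) : ℤ)) (n-1)
    rw [show n - 1 + 1 = n by omega, hsum_e] at h
    omega
  have hsum2 : ∑ t ∈ Finset.range (n-1), (level G (e (t+1)) : ℤ)
      = (totalLevel G : ℤ) - level G (e 0) := by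
    have h := Finset.sum_range_succ' (fun t => (level G (e t) : ℤ)) (n-1)
    rw [show n - 1 + 1 = n by omega, hsum_e] at h
    omega
  have hsum_g : ∑ t ∈ Finset.range (n-1),
      ((G.diam : ℤ) + epsilon G - level G (e t) - level G (e (t+1)))
      = ((n : ℤ) - 1) * ((G.diam : ℤ) + epsilon G) - 2 * totalLevel G
        + level G (e 0) + level G (e (n-1)) := by
    have hc : ∀ t ∈ Finset.range (n-1),
        (G.diam : ℤ) + epsilon G - level G (e t) - level G (e (t+1))
        = ((G.diam : ℤ) + epsilon G) - ((level G (e t) : ℤ) + (level G (e (t+1)) : ℤ)) := by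
      intro t _; ring
    rw [Finset.sum_congr rfl hc, Finset.sum_sub_distrib, Finset.sum_const,
      Finset.card_range]
    have hsplit : ∑ t ∈ Finset.range (n-1), ((level G (e t) : ℤ) + (level G (e (t+1)) : ℤ))
        = (∑ t ∈ Finset.range (n-1), (level G (e t) : ℤ))
          + ∑ t ∈ Finset.range (n-1), (level G (e (t+1)) : ℤ) := Finset.sum_add_distrib
    rw [hsplit, hsum1, hsum2, nsmul_eq_mul]
    have : ((n - 1 : ℕ) : ℤ) = (n : ℤ) - 1 := by omega
    rw [this]
    ring
  -- each gap is exactly d + ε - L(t) - L(t+1)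
  have hL01 : (epsilon G : ℤ) ≤ level G (e 0) + level G (e (n-1)) := by
    by_cases hnc : (weightCenters G).ncard = 1
    · obtain ⟨w, hW⟩ := Set.ncard_eq_one.mp hnc
      have hne : e 0 ≠ e (n-1) := hediff 0 (n-1) (by omega) le_rfl (by omega)
      have hε : (epsilon G : ℤ) = 1 := by unfold epsilon; simp [hnc]
      rcases Nat.eq_zero_or_pos (level G (e 0)) with h0 | h0
      · rcases Nat.eq_zero_or_pos (level G (e (n-1))) with h1 | h1
        · exfalso
          have m0 := (level_eq_zero_iff hconn (e 0)).mp h0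
          have m1 := (level_eq_zero_iff hconn (e (n-1))).mp h1
          rw [hW] at m0 m1
          exact hne (m0.trans m1.symm)
        · omega
      · omega
    · have hε : (epsilon G : ℤ) = 0 := by unfold epsilon; simp [hnc]
      omega
  have hnn : ∀ t ∈ Finset.range (n-1), (0:ℤ) ≤ (F (t+1) - F t)
      - ((G.diam : ℤ) + epsilon G - level G (e t) - level G (e (t+1))) := by
    intro t ht
    have := hgap_lb t (Finset.mem_range.mp ht)
    omega
  have htotal : ∑ t ∈ Finset.range (n-1), ((F (t+1) - F t)
      - ((G.diam : ℤ) + epsilon G - level G (e t) - level G (e (t+1))))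
      = (epsilon G : ℤ) - level G (e 0) - level G (e (n-1)) := by
    rw [Finset.sum_sub_distrib, htele, hsum_g, ← hspanval, hspan_eq]
    ring
  have hsum0 : ∑ t ∈ Finset.range (n-1), ((F (t+1) - F t)
      - ((G.diam : ℤ) + epsilon G - level G (e t) - level G (e (t+1)))) = 0 := by
    have h1 := Finset.sum_nonneg hnn
    rw [htotal] at h1 ⊢
    omega
  have hzero := (Finset.sum_eq_zero_iff_of_nonneg hnn).mp hsum0
  have hLsum : (epsilon G : ℤ) = level G (e 0) + level G (e (n-1)) := by
    have := htotal
    rw [hsum0] at this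
    omega
  -- condition (b) for the sorted order
  have hbe : ∀ i j : ℕ, i < j → j ≤ n - 1 →
      (∑ t ∈ Finset.Ico i j, ((level G (e t) : ℤ) + (level G (e (t + 1)) : ℤ)))
          - ((j : ℤ) - (i : ℤ)) * ((G.diam : ℤ) + (epsilon G : ℤ)) + ((G.diam : ℤ) + 1)
        ≤ (G.dist (e i) (e j) : ℤ) := by
    intro i j hij hj
    have hsumIco : F j - F i = ∑ t ∈ Finset.Ico i j, (F (t+1) - F t) := by
      rw [Finset.sum_Ico_eq_sub _ hij.le, Finset.sum_range_sub F, Finset.sum_range_sub F]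
      ring
    have hgap_eq : ∀ t ∈ Finset.Ico i j, F (t+1) - F t
        = (G.diam : ℤ) + epsilon G - level G (e t) - level G (e (t+1)) := by
      intro t ht
      have ht' := Finset.mem_Ico.mp ht
      have := hzero t (Finset.mem_range.mpr (by omega))
      omega
    have h2 : F j - F i = ∑ t ∈ Finset.Ico i j,
        ((G.diam : ℤ) + epsilon G - level G (e t) - level G (e (t+1))) := by
      rw [hsumIco]; exact Finset.sum_congr rfl hgap_eq
    have h3 : ∑ t ∈ Finset.Ico i j,
        ((G.diam : ℤ) + epsilon G - level G (e t) - level G (e (t+1)))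
        = ((j : ℤ) - i) * ((G.diam : ℤ) + epsilon G)
          - ∑ t ∈ Finset.Ico i j, ((level G (e t) : ℤ) + (level G (e (t+1)) : ℤ)) := by
      have hc : ∀ t ∈ Finset.Ico i j,
          (G.diam : ℤ) + epsilon G - level G (e t) - level G (e (t+1))
          = ((G.diam : ℤ) + epsilon G) - ((level G (e t) : ℤ) + (level G (e (t+1)) : ℤ)) := by
        intro t _; ring
      rw [Finset.sum_congr rfl hc, Finset.sum_sub_distrib, Finset.sum_const, Nat.card_Ico,
        nsmul_eq_mul]
      have : ((j - i : ℕ) : ℤ) = (j : ℤ) - i := by omega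
      rw [this]
    have hne : e i ≠ e j := hediff i j (by omega) hj (by omega)
    have hr := hf (e i) (e j) hne
    have hr' : (G.diam : ℤ) + 1 ≤ (G.dist (e i) (e j) : ℤ)
        + ((f (e i) : ℤ) - (f (e j) : ℤ)).natAbs := by exact_mod_cast hr
    have hlt := hFlt i j hij hj
    have habs : (((f (e i) : ℤ) - (f (e j) : ℤ)).natAbs : ℤ) = F j - F i := by
      simp only [hF] at hlt ⊢
      omega
    rw [habs] at hr'
    linarith [h2, h3, hr']
  have hne0 : e 0 ≠ e (n-1) := hediff 0 (n-1) (by omega) le_rfl (by omega)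
  by_cases h0 : level G (e 0) = 0
  · refine ⟨e, hbij, ?_, ?_, hbe⟩
    · -- one weight center
      intro w hW
      have hnc : (weightCenters G).ncard = 1 := by rw [hW]; exact Set.ncard_singleton w
      have hε1 : epsilon G = 1 := by unfold epsilon; simp [hnc]
      have he0w : e 0 = w := by
        have := (level_eq_zero_iff hconn (e 0)).mp h0
        rwa [hW, Set.mem_singleton_iff] at this
      refine ⟨he0w, ?_⟩
      have hl1 : level G (e (n-1)) = 1 := by
        rw [hε1] at hLsum
        omega
      have hdist1 : G.dist (e (n-1)) w = 1 := by rw [← level_eq_dist hW]; exact hl1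
      exact (SimpleGraph.dist_eq_one_iff_adj.mp hdist1).symm
    · -- two weight centers
      intro w w' hww' hW
      have hnc : (weightCenters G).ncard = 2 := by rw [hW]; exact Set.ncard_pair hww'
      have hε0 : epsilon G = 0 := by unfold epsilon; simp [hnc]
      have hl0 : level G (e 0) = 0 ∧ level G (e (n-1)) = 0 := by
        rw [hε0] at hLsum; constructor <;> omega
      have m0 := (level_eq_zero_iff hconn (e 0)).mp hl0.1
      have m1 := (level_eq_zero_iff hconn (e (n-1))).mp hl0.2
      rw [hW] at m0 m1
      rcases m0 with h | h <;> rcases m1 with h' | h'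
      · exact absurd (h.trans h'.symm) hne0
      · rw [h, h']
      · rw [h, h']; exact Set.pair_comm w' w
      · exact absurd (h.trans h'.symm) hne0
  · -- reversed order
    have hε1 : epsilon G = 1 := by omega
    have hl1 : level G (e 0) = 1 ∧ level G (e (n-1)) = 0 := by
      rw [hε1] at hLsum
      omega
    refine ⟨fun i => e (n - 1 - i), ?_, ?_, ?_, ?_⟩
    · -- bijection
      intro v
      obtain ⟨i, ⟨hi, hie⟩, huniq⟩ := hbij v
      refine ⟨n - 1 - i, ⟨by omega, ?_⟩, ?_⟩
      · show e (n - 1 - (n - 1 - i)) = v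
        rw [show n - 1 - (n - 1 - i) = i by omega, hie]
      · rintro j ⟨hj, hje⟩
        have := huniq (n - 1 - j) ⟨by omega, hje⟩
        omega
    · -- one weight center
      intro w hW
      constructor
      · have := (level_eq_zero_iff hconn (e (n-1))).mp hl1.2
        rw [hW, Set.mem_singleton_iff] at this
        show e (n - 1 - 0) = w
        rw [Nat.sub_zero]
        exact this
      · show G.Adj w (e (n - 1 - (n - 1)))
        rw [Nat.sub_self]
        have hdist1 : G.dist (e 0) w = 1 := by rw [← level_eq_dist hW]; exact hl1.1
        exact (SimpleGraph.dist_eq_one_iff_adj.mp hdist1).symm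
    · -- two weight centers: impossible since epsilon = 1
      intro w w' hww' hW
      exfalso
      have hnc : (weightCenters G).ncard = 2 := by rw [hW]; exact Set.ncard_pair hww'
      have hε0 : epsilon G = 0 := by unfold epsilon; simp [hnc]
      omega
    · -- condition (b)
      intro i j hij hj
      beta_reduce
      have key := hbe (n-1-j) (n-1-i) (by omega) (by omega)
      have hco : ((n-1-i : ℕ) : ℤ) - ((n-1-j : ℕ) : ℤ) = (j : ℤ) - (i : ℤ) := by omega
      rw [hco] at key
      have hsum : ∑ t ∈ Finset.Ico i j,
          ((level G (e (n - 1 - t)) : ℤ) + (level G (e (n - 1 - (t+1))) : ℤ))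
          = ∑ s ∈ Finset.Ico (n-1-j) (n-1-i),
            ((level G (e s) : ℤ) + (level G (e (s+1)) : ℤ)) := by
        refine Finset.sum_nbij' (i := fun t => n - 2 - t) (j := fun s => n - 2 - s)
          ?_ ?_ ?_ ?_ ?_
        · intro a ha
          beta_reduce
          rw [Finset.mem_Ico] at ha ⊢
          omega
        · intro a ha
          beta_reduce
          rw [Finset.mem_Ico] at ha ⊢
          omega
        · intro a ha
          beta_reduce
          rw [Finset.mem_Ico] at ha
          omega
        · intro a ha
          beta_reduce
          rw [Finset.mem_Ico] at ha
          omega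
        · intro a ha
          beta_reduce
          rw [Finset.mem_Ico] at ha
          rw [show n - 1 - (a+1) = n - 2 - a by omega, show n - 2 - a + 1 = n - 1 - a by omega]
          ring
      rw [hsum]
      rw [show G.dist (e (n-1-i)) (e (n-1-j)) = G.dist (e (n-1-j)) (e (n-1-i)) from
        SimpleGraph.dist_comm]
      exact key

end Radio
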